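/- For 0 < ε < 1/4, let Λ₁ and Λ₂ be the model qubit channels, and let V be the unique linear map on M_2(ℂ) satisfying V(I) = I, V(X) = η X, V(Z) = η Z, and V(Y) = (1 − 4ε) Y, where η = (1 − 4ε + 8ε²)/(1 − 2ε). Then V ∘ Λ₁ = Λ₂, V is positive and trace-preserving, but V is not completely positive; i.e. the intermediate map of the model is weakly non-Markovian in this parameter range. -/

import Mathlib

open scoped ComplexOrder
open Matrix

/-- The Pauli `X` matrix. -/
def pauliX : Matrix (Fin 2) (Fin 2) ℂ := !![0, 1; 1, 0]

/-- The Pauli `Y` matrix. -/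
def pauliY : Matrix (Fin 2) (Fin 2) ℂ := !![0, -Complex.I; Complex.I, 0]

/-- The Pauli `Z` matrix. -/
def pauliZ : Matrix (Fin 2) (Fin 2) ℂ := !![1, 0; 0, -1]

/-- The model channel `Λ₁(ρ) = (1 − 2ε)ρ + ε ZρZ + ε XρX`. -/
noncomputable def chan1 (ε : ℝ) (ρ : Matrix (Fin 2) (Fin 2) ℂ) :
    Matrix (Fin 2) (Fin 2) ℂ :=
  ((1 - 2 * ε : ℝ) : ℂ) • ρ + ((ε : ℝ) : ℂ) • (pauliZ * ρ * pauliZ)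
    + ((ε : ℝ) : ℂ) • (pauliX * ρ * pauliX)

/-- The model channel `Λ₂(ρ) = [(1 − 2ε)² + 4ε²]ρ + 2ε(1 − 2ε)(ZρZ + XρX)`. -/
noncomputable def chan2 (ε : ℝ) (ρ : Matrix (Fin 2) (Fin 2) ℂ) :
    Matrix (Fin 2) (Fin 2) ℂ :=
  (((1 - 2 * ε) ^ 2 + 4 * ε ^ 2 : ℝ) : ℂ) • ρ
    + ((2 * ε * (1 - 2 * ε) : ℝ) : ℂ) • (pauliZ * ρ * pauliZ + pauliX * ρ * pauliX)

/-- The tensor product `Φ ⊗ id_{M_k(ℂ)}` of a map between matrix algebras with the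
identity on `M_k(ℂ)`, acting blockwise. -/
def mapTensorId {m d : Type*} [Fintype m] [Fintype d] (k : ℕ)
    (Φ : Matrix m m ℂ → Matrix d d ℂ)
    (M : Matrix (m × Fin k) (m × Fin k) ℂ) : Matrix (d × Fin k) (d × Fin k) ℂ :=
  Matrix.of fun p q => Φ (Matrix.of fun i j => M (i, p.2) (j, q.2)) p.1 q.1

/-- A map between matrix algebras is completely positive if `Φ ⊗ id_{M_k(ℂ)}` is
positive for every `k`. -/
def IsCompletelyPositive {m d : Type*} [Fintype m] [Fintype d]
    (Φ : Matrix m m ℂ → Matrix d d ℂ) : Prop :=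
  ∀ (k : ℕ) (M : Matrix (m × Fin k) (m × Fin k) ℂ),
    M.PosSemidef → (mapTensorId k Φ M).PosSemidef

/-- A map between matrix algebras is positive if it sends positive semidefinite
matrices to positive semidefinite matrices. -/
def IsPositiveMap {m d : Type*} [Fintype m] [Fintype d]
    (Φ : Matrix m m ℂ → Matrix d d ℂ) : Prop :=
  ∀ X : Matrix m m ℂ, X.PosSemidef → (Φ X).PosSemidef

/-- A map between matrix algebras is trace-preserving if `Tr (Φ X) = Tr X` for all `X`. -/
def IsTracePreservingMap {m d : Type*} [Fintype m] [Fintype d]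
    (Φ : Matrix m m ℂ → Matrix d d ℂ) : Prop :=
  ∀ X : Matrix m m ℂ, (Φ X).trace = X.trace

/-- scalar multiplication by a nonnegative real preserves positive
semidefiniteness -/
lemma psd_real_smul {n : Type*} [Fintype n] (r : ℝ) (hr : 0 ≤ r)
    {M : Matrix n n ℂ} (hM : M.PosSemidef) : ((r : ℂ) • M).PosSemidef := by
  have h0 : (0:ℂ) ≤ (r:ℂ) := Complex.zero_le_real.mpr hr
  refine Matrix.posSemidef_iff_dotProduct_mulVec.mpr ⟨?_, ?_⟩
  · have : ((r : ℂ) • M)ᴴ = (r : ℂ) • M := by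
      rw [Matrix.conjTranspose_smul, hM.1.eq]
      simp [Complex.star_def, Complex.conj_ofReal]
    exact this
  · intro x
    rw [Matrix.smul_mulVec, dotProduct_smul, smul_eq_mul]
    exact mul_nonneg h0 (hM.dotProduct_mulVec_nonneg x)


set_option maxHeartbeats 1000000

/-- for `0 < ε < 1/4`, the unique linear map `V` on `M₂(ℂ)` with
`V(I) = I`, `V(X) = ηX`, `V(Z) = ηZ`, `V(Y) = (1 − 4ε)Y`, where
`η = (1 − 4ε + 8ε²)/(1 − 2ε)`, satisfies `V ∘ Λ₁ = Λ₂`, is positive and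
trace-preserving, but is not completely positive: the intermediate map of the model is
weakly non-Markovian in this parameter range. -/
theorem intermediate_map_weakly_nonMarkovian
    (ε : ℝ) (hε0 : 0 < ε) (hε : ε < 1 / 4)
    (V : Matrix (Fin 2) (Fin 2) ℂ → Matrix (Fin 2) (Fin 2) ℂ)
    (hVlin : IsLinearMap ℂ V)
    (hVI : V 1 = 1)
    (hVX : V pauliX = (((1 - 4 * ε + 8 * ε ^ 2) / (1 - 2 * ε) : ℝ) : ℂ) • pauliX)
    (hVZ : V pauliZ = (((1 - 4 * ε + 8 * ε ^ 2) / (1 - 2 * ε) : ℝ) : ℂ) • pauliZ)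
    (hVY : V pauliY = ((1 - 4 * ε : ℝ) : ℂ) • pauliY) :
    (∀ ρ : Matrix (Fin 2) (Fin 2) ℂ, V (chan1 ε ρ) = chan2 ε ρ) ∧
    IsPositiveMap V ∧
    IsTracePreservingMap V ∧
    ¬ IsCompletelyPositive V := by
  have h12 : (0:ℝ) < 1 - 2*ε := by linarith
  have h12c : ((1:ℂ) - 2*(ε:ℂ)) ≠ 0 := by
    intro h
    have : ((1 - 2*ε : ℝ) : ℂ) = 0 := by push_cast; linear_combination h
    exact h12.ne' (by exact_mod_cast this)
  have h12c' : (1:ℂ) - (ε:ℂ)*2 ≠ 0 := by rw [mul_comm]; exact h12c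
  set N : ℂ := (((1 - 4 * ε + 8 * ε ^ 2) / (1 - 2 * ε) : ℝ) : ℂ) with hN
  set μ : ℂ := ((1 - 4 * ε : ℝ) : ℂ) with hμ
  -- master formula for V
  have hform : ∀ ρ : Matrix (Fin 2) (Fin 2) ℂ, V ρ =
      !![(ρ 0 0 + ρ 1 1)/2 + N*(ρ 0 0 - ρ 1 1)/2,
         N*(ρ 0 1 + ρ 1 0)/2 + μ*(ρ 0 1 - ρ 1 0)/2;
         N*(ρ 0 1 + ρ 1 0)/2 - μ*(ρ 0 1 - ρ 1 0)/2,
         (ρ 0 0 + ρ 1 1)/2 - N*(ρ 0 0 - ρ 1 1)/2] := by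
    intro ρ
    have hρ : ρ = (((ρ 0 0 + ρ 1 1)/2) • (1 : Matrix (Fin 2) (Fin 2) ℂ))
        + (((ρ 0 1 + ρ 1 0)/2) • pauliX)
        + ((Complex.I * (ρ 0 1 - ρ 1 0)/2) • pauliY)
        + (((ρ 0 0 - ρ 1 1)/2) • pauliZ) := by
      conv_lhs => rw [Matrix.eta_fin_two ρ]
      ext i j
      fin_cases i <;> fin_cases j <;> simp [pauliX, pauliY, pauliZ, Matrix.one_apply]
      · ring
      · linear_combination ((ρ 0 1 - ρ 1 0)/2) * Complex.I_sq
      · linear_combination ((ρ 1 0 - ρ 0 1)/2) * Complex.I_sq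
      · ring
    conv_lhs => rw [hρ]
    rw [hVlin.map_add, hVlin.map_add, hVlin.map_add, hVlin.map_smul, hVlin.map_smul,
      hVlin.map_smul, hVlin.map_smul, hVI, hVX, hVY, hVZ]
    ext i j
    fin_cases i <;> fin_cases j <;> simp [pauliX, pauliY, pauliZ, Matrix.one_apply]
    · ring
    · linear_combination (-μ*(ρ 0 1 - ρ 1 0)/2) * Complex.I_sq
    · linear_combination (μ*(ρ 0 1 - ρ 1 0)/2) * Complex.I_sq
    · ring
  have hZc : ∀ ρ : Matrix (Fin 2) (Fin 2) ℂ,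
      pauliZ * ρ * pauliZ = !![ρ 0 0, -(ρ 0 1); -(ρ 1 0), ρ 1 1] := by
    intro ρ
    conv_lhs => rw [Matrix.eta_fin_two ρ]
    simp only [pauliZ, Matrix.mul_fin_two]
    ext i j
    fin_cases i <;> fin_cases j <;> simp <;> ring
  have hXc : ∀ ρ : Matrix (Fin 2) (Fin 2) ℂ,
      pauliX * ρ * pauliX = !![ρ 1 1, ρ 1 0; ρ 0 1, ρ 0 0] := by
    intro ρ
    conv_lhs => rw [Matrix.eta_fin_two ρ]
    simp only [pauliX, Matrix.mul_fin_two]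
    ext i j
    fin_cases i <;> fin_cases j <;> simp <;> ring
  refine ⟨?_, ?_, ?_, ?_⟩
  · -- intertwining
    intro ρ
    rw [hform]
    ext i j
    fin_cases i <;> fin_cases j <;>
      simp [chan1, chan2, hZc, hXc, hN, hμ] <;>
      (push_cast; field_simp; ring)
  · -- positivity
    have hdecomp : ∀ ρ : Matrix (Fin 2) (Fin 2) ℂ, V ρ =
        ((1 - 2*ε : ℝ) : ℂ) • ρ + ((ε/(1 - 2*ε) : ℝ) : ℂ) • ρᵀ
          + ((ε*(1 - 4*ε)/(1 - 2*ε) : ℝ) : ℂ) •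
              (!![0, 1; -1, 0] * ρᵀ * (!![0, 1; -1, 0] : Matrix (Fin 2) (Fin 2) ℂ)ᴴ) := by
      intro ρ
      have ht : ρᵀ = !![ρ 0 0, ρ 1 0; ρ 0 1, ρ 1 1] := by
        conv_lhs => rw [Matrix.eta_fin_two ρ]
        ext i j
        fin_cases i <;> fin_cases j <;> simp
      have hA : (!![0, 1; -1, 0] : Matrix (Fin 2) (Fin 2) ℂ)ᴴ = !![0, -1; 1, 0] := by
        ext i j
        fin_cases i <;> fin_cases j <;> simp [Matrix.conjTranspose_apply]
      rw [hform, ht, hA, Matrix.mul_fin_two, Matrix.mul_fin_two]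
      ext i j
      fin_cases i <;> fin_cases j <;> simp [hN, hμ] <;>
        (push_cast; field_simp; ring)
    intro X hX
    rw [hdecomp X]
    refine Matrix.PosSemidef.add (Matrix.PosSemidef.add ?_ ?_) ?_
    · exact psd_real_smul _ h12.le hX
    · exact psd_real_smul _ (div_nonneg hε0.le h12.le) hX.transpose
    · exact psd_real_smul _
        (div_nonneg (mul_nonneg hε0.le (by linarith)) h12.le)
        (hX.transpose.mul_mul_conjTranspose_same _)
  · -- trace preserving
    intro X
    rw [hform, Matrix.trace_fin_two, Matrix.trace_fin_two]
    simp
    try ring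
  · -- not completely positive
    intro hCP
    set M : Matrix ((Fin 2) × Fin 2) ((Fin 2) × Fin 2) ℂ :=
      Matrix.of (fun p q => (if p.1 = p.2 then 1 else 0) * (if q.1 = q.2 then 1 else 0))
      with hM
    have hMpsd : M.PosSemidef := by
      refine Matrix.posSemidef_iff_dotProduct_mulVec.mpr ⟨?_, ?_⟩
      · ext p q
        simp only [hM, Matrix.conjTranspose_apply, Matrix.of_apply]
        split_ifs <;> simp [mul_comm]
      · intro x
        have hx : dotProduct (star x) (M *ᵥ x)
            = star (x (0,0) + x (1,1)) * (x (0,0) + x (1,1)) := by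
          simp [hM, dotProduct, Matrix.mulVec, Fintype.sum_prod_type,
            Fin.sum_univ_succ, star_add]
          ring
        rw [hx]
        exact star_mul_self_nonneg _
    have h2 := (hCP 2 M hMpsd).dotProduct_mulVec_nonneg
    set v : Fin 2 × Fin 2 → ℂ :=
      fun p => if p = (0,1) then 1 else if p = (1,0) then -1 else 0 with hv
    have h3 := h2 v
    have hval : dotProduct (star v) (mapTensorId 2 V M *ᵥ v) = 1 + μ - 2*N := by
      simp only [mapTensorId, dotProduct, Matrix.mulVec, Matrix.of_apply]
      simp only [hform]
      simp [hv, hM, Fintype.sum_prod_type, Fin.sum_univ_succ]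
      ring
    rw [hval] at h3
    have hre : ((1 + (1 - 4*ε) - 2*((1 - 4*ε + 8*ε^2)/(1 - 2*ε)) : ℝ) : ℂ)
        = 1 + μ - 2*N := by
      rw [hN, hμ]; push_cast; ring
    rw [← hre, Complex.zero_le_real] at h3
    have hq : (1 - 4*ε + 8*ε^2)/(1 - 2*ε) * (1 - 2*ε) = 1 - 4*ε + 8*ε^2 :=
      div_mul_cancel₀ _ h12.ne'
    nlinarith [mul_nonneg h3 h12.le, hq, sq_nonneg ε]
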